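/- If u₁, …, u_k and v₁, …, v_k are words over an alphabet Σ with concatenations U = u₁⋯u_k and V = v₁⋯v_k, then U = V if and only if ρ(U) + ρ̄(V) = 1, where ρ, ρ̄ are the binary encodings with end marker (assuming all uᵢ, vᵢ are over {A,B} and k ≥ 1 with U, V nonempty). -/
import Mathlib


/-- The end-marked binary encoding of a word over a two-element alphabet. -/
noncomputable def rho (θ : Bool → ℝ) (w : List Bool) : ℝ :=
  (∑ i : Fin w.length, θ (w.get i) * (1 / 2 : ℝ) ^ (i.val + 1)) + (1 / 2 : ℝ) ^ (w.length + 1)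

lemma rho_nil (θ : Bool → ℝ) : rho θ [] = 1 / 2 := by
  simp [rho]

lemma rho_cons (θ : Bool → ℝ) (a : Bool) (w : List Bool) :
    rho θ (a :: w) = θ a / 2 + rho θ w / 2 := by
  have h : ∀ i : Fin w.length,
      θ ((a :: w).get i.succ) * (1 / 2 : ℝ) ^ (i.succ.val + 1)
        = (θ (w.get i) * (1 / 2 : ℝ) ^ (i.val + 1)) * (1 / 2) := by
    intro i
    simp [pow_succ]
    ring
  simp only [rho, List.length_cons, Fin.sum_univ_succ]
  rw [Finset.sum_congr rfl (fun i _ => h i), ← Finset.sum_mul]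
  simp [pow_succ]
  ring

lemma rho_pos (θ : Bool → ℝ) (hθ : ∀ x, θ x = 0 ∨ θ x = 1) (w : List Bool) :
    0 < rho θ w := by
  induction w with
  | nil => rw [rho_nil]; norm_num
  | cons a w ih =>
    rw [rho_cons]
    have : (0:ℝ) ≤ θ a := by rcases hθ a with h | h <;> rw [h] <;> norm_num
    linarith

lemma rho_lt_one (θ : Bool → ℝ) (hθ : ∀ x, θ x = 0 ∨ θ x = 1) (w : List Bool) :
    rho θ w < 1 := by
  induction w with
  | nil => rw [rho_nil]; norm_num
  | cons a w ih =>
    rw [rho_cons]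
    have : θ a ≤ 1 := by rcases hθ a with h | h <;> rw [h] <;> norm_num
    linarith

lemma rho_add_rho_bar (θ θbar : Bool → ℝ) (hsum : ∀ x, θ x + θbar x = 1)
    (w : List Bool) : rho θ w + rho θbar w = 1 := by
  induction w with
  | nil => rw [rho_nil, rho_nil]; norm_num
  | cons a w ih =>
    rw [rho_cons, rho_cons]
    have := hsum a
    linarith

lemma rho_inj (θ : Bool → ℝ) (hθ : ∀ x, θ x = 0 ∨ θ x = 1)
    (hinj : θ true ≠ θ false) :
    ∀ w1 w2 : List Bool, rho θ w1 = rho θ w2 → w1 = w2 := by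
  intro w1
  induction w1 with
  | nil =>
    intro w2 h
    cases w2 with
    | nil => rfl
    | cons b w2 =>
      exfalso
      rw [rho_nil, rho_cons] at h
      have h1 := rho_pos θ hθ w2
      have h2 := rho_lt_one θ hθ w2
      rcases hθ b with hb | hb <;> rw [hb] at h <;> linarith
  | cons a w1 ih =>
    intro w2 h
    cases w2 with
    | nil =>
      exfalso
      rw [rho_cons, rho_nil] at h
      have h1 := rho_pos θ hθ w1
      have h2 := rho_lt_one θ hθ w1
      rcases hθ a with ha | ha <;> rw [ha] at h <;> linarith
    | cons b w2 =>
      rw [rho_cons, rho_cons] at h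
      have hab : θ a = θ b := by
        by_contra hne
        have h1 := rho_pos θ hθ w1
        have h2 := rho_lt_one θ hθ w1
        have h3 := rho_pos θ hθ w2
        have h4 := rho_lt_one θ hθ w2
        rcases hθ a with ha | ha <;> rcases hθ b with hb | hb <;>
          rw [ha, hb] at h hne <;> simp at hne <;> linarith
      have hab' : a = b := by
        cases a <;> cases b <;> first | rfl | (exfalso; exact hinj (by rw [hab]) ) |
          (exfalso; exact hinj (by rw [← hab]))
      subst hab'
      rw [hab] at h
      have : rho θ w1 = rho θ w2 := by linarith
      rw [ih w2 this]

theorem stmt_7 (θ θbar : Bool → ℝ)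
    (hθ : ∀ x, θ x = 0 ∨ θ x = 1) (hθbar : ∀ x, θbar x = 0 ∨ θbar x = 1)
    (hsum : ∀ x, θ x + θbar x = 1) (hinj : θ true ≠ θ false)
    (k : ℕ) (hk : 1 ≤ k) (us vs : Fin k → List Bool)
    (hU : (List.ofFn us).flatten ≠ []) (hV : (List.ofFn vs).flatten ≠ []) :
    (List.ofFn us).flatten = (List.ofFn vs).flatten ↔
      rho θ (List.ofFn us).flatten + rho θbar (List.ofFn vs).flatten = 1 := by
  set U := (List.ofFn us).flatten
  set V := (List.ofFn vs).flatten
  constructor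
  · intro h
    rw [h]
    exact rho_add_rho_bar θ θbar hsum V
  · intro h
    have hV1 : rho θ V + rho θbar V = 1 := rho_add_rho_bar θ θbar hsum V
    have : rho θ U = rho θ V := by linarith
    exact rho_inj θ hθ hinj U V this
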